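/- For all nonnegative integers p, q and all real t, the convolution identity ∫_ℝ B_p(t+s) B_q(s) ds = B_{p+q+1}(p+1-t) = B_{p+q+1}(q+1+t) holds. -/

import Mathlib

open MeasureTheory Real

noncomputable def B : ℕ → ℝ → ℝ
  | 0, t => if t ∈ Set.Ico (0:ℝ) 1 then 1 else 0
  | p + 1, t => ∫ s in (0:ℝ)..1, B p (t - s)

lemma B_succ_eq (p : ℕ) (t : ℝ) : B (p+1) t = ∫ u in (t-1)..t, B p u := by
  show (∫ s in (0:ℝ)..1, B p (t - s)) = _
  rw [intervalIntegral.integral_comp_sub_left (B p) t]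
  norm_num

lemma B_nonneg (p : ℕ) (t : ℝ) : 0 ≤ B p t := by
  induction p generalizing t with
  | zero => show (0:ℝ) ≤ if _ then _ else _; split <;> norm_num
  | succ p ih =>
      rw [B_succ_eq]
      exact intervalIntegral.integral_nonneg (by linarith) (fun u _ => ih u)

lemma B_le_one (p : ℕ) (t : ℝ) : B p t ≤ 1 := by
  induction p generalizing t with
  | zero => show (if _ then _ else _ : ℝ) ≤ 1; split <;> norm_num
  | succ p ih =>
      rw [B_succ_eq]
      calc (∫ u in (t-1)..t, B p u) ≤ ‖∫ u in (t-1)..t, B p u‖ := le_abs_self _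
      _ ≤ 1 * |t - (t-1)| := by
          apply intervalIntegral.norm_integral_le_of_norm_le_const
          intro x _
          rw [Real.norm_eq_abs, abs_of_nonneg (B_nonneg p x)]
          exact ih x
      _ = 1 := by norm_num

lemma B_zero_of (p : ℕ) (t : ℝ) (h : t < 0 ∨ (p:ℝ) + 1 ≤ t) : B p t = 0 := by
  induction p generalizing t with
  | zero =>
      show (if _ then _ else _ : ℝ) = 0
      rw [if_neg]
      simp only [Set.mem_Ico, not_and_or, not_le, not_lt]
      rcases h with h | h
      · exact Or.inl h
      · exact Or.inr (by norm_num at h ⊢; linarith)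
  | succ p ih =>
      rw [B_succ_eq]
      rw [intervalIntegral.integral_congr (g := fun _ => (0:ℝ))]
      · simp
      · intro u hu
        rw [Set.uIcc_of_le (by linarith)] at hu
        rcases h with h | h
        · exact ih u (Or.inl (lt_of_le_of_lt hu.2 h))
        · refine ih u (Or.inr ?_)
          have := hu.1
          push_cast at h ⊢
          linarith

lemma B_measurable (p : ℕ) : Measurable (B p) := by
  induction p with
  | zero =>
      show Measurable fun t => if t ∈ Set.Ico (0:ℝ) 1 then (1:ℝ) else 0
      exact Measurable.ite measurableSet_Ico measurable_const measurable_const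
  | succ p ih =>
      have hint : Integrable (B p) := by
        have hsupp : Function.support (B p) ⊆ Set.Icc 0 ((p:ℝ)+1) := by
          intro t ht
          simp only [Function.mem_support] at ht
          by_contra hc
          simp only [Set.mem_Icc, not_and_or, not_le] at hc
          exact ht (B_zero_of p t (by rcases hc with h | h; exacts [Or.inl h, Or.inr h.le]))
        rw [← integrableOn_iff_integrable_of_support_subset hsupp]
        refine Measure.integrableOn_of_bounded (M := 1) (by simp) ih.aestronglyMeasurable ?_
        filter_upwards with x
        rw [Real.norm_eq_abs, abs_of_nonneg (B_nonneg p x)]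
        exact B_le_one p x
      have hc : Continuous fun t => ∫ u in (0:ℝ)..t, B p u :=
        hint.continuous_primitive 0
      have : (B (p+1)) = fun t => (∫ u in (0:ℝ)..t, B p u) - ∫ u in (0:ℝ)..(t-1), B p u := by
        funext t
        rw [B_succ_eq]
        rw [← intervalIntegral.integral_add_adjacent_intervals
          (hint.intervalIntegrable) (hint.intervalIntegrable) (a := 0) (b := t-1) (c := t)]
        ring
      rw [this]
      exact (hc.sub (hc.comp (continuous_id.sub continuous_const))).measurable

lemma B_integrable (p : ℕ) : Integrable (B p) := by
  have hsupp : Function.support (B p) ⊆ Set.Icc 0 ((p:ℝ)+1) := by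
    intro t ht
    simp only [Function.mem_support] at ht
    by_contra hc
    simp only [Set.mem_Icc, not_and_or, not_le] at hc
    exact ht (B_zero_of p t (by rcases hc with h | h; exacts [Or.inl h, Or.inr h.le]))
  rw [← integrableOn_iff_integrable_of_support_subset hsupp]
  refine Measure.integrableOn_of_bounded (M := 1) (by simp) (B_measurable p).aestronglyMeasurable ?_
  filter_upwards with x
  rw [Real.norm_eq_abs, abs_of_nonneg (B_nonneg p x)]
  exact B_le_one p x


lemma B_zero_ae_symm : ∀ᵐ x : ℝ, B 0 x = B 0 (1 - x) := by
  have hsub : {x : ℝ | ¬ (B 0 x = B 0 (1 - x))} ⊆ {0, 1} := by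
    intro x hx
    by_contra hmem
    apply hx
    simp only [Set.mem_insert_iff, Set.mem_singleton_iff, not_or] at hmem
    show (if x ∈ Set.Ico (0:ℝ) 1 then (1:ℝ) else 0) =
      (if 1 - x ∈ Set.Ico (0:ℝ) 1 then (1:ℝ) else 0)
    simp only [Set.mem_Ico]
    split_ifs with h1 h2 h2
    · rfl
    · have h0 : 0 < x := lt_of_le_of_ne h1.1 (Ne.symm hmem.1)
      exact absurd ⟨by linarith [h1.2], by linarith⟩ h2
    · have h0 : x < 1 := lt_of_le_of_ne (by linarith [h2.2]) hmem.2
      exact absurd ⟨by linarith [h2.2], h0⟩ h1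
    · rfl
  have h2 : volume ({0, 1} : Set ℝ) = 0 :=
    ((Set.finite_singleton (1:ℝ)).insert 0).measure_zero _
  exact measure_mono_null hsub h2

lemma int_symm (p : ℕ) (a b : ℝ) :
    (∫ u in a..b, B p u) = ∫ u in ((p:ℝ)+1-b)..((p:ℝ)+1-a), B p u := by
  induction p generalizing a b with
  | zero =>
      simp only [Nat.cast_zero, zero_add]
      rw [← intervalIntegral.integral_comp_sub_left (B 0) 1]
      apply intervalIntegral.integral_congr_ae
      filter_upwards [B_zero_ae_symm] with x hx _
      exact hx
  | succ p ih =>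
      have hsym : ∀ x : ℝ, B (p+1) x = B (p+1) ((p:ℝ)+2-x) := by
        intro x
        rw [B_succ_eq, B_succ_eq, ih]
        congr 1 <;> ring
      rw [intervalIntegral.integral_congr (g := fun u => B (p+1) ((p:ℝ)+2-u)) (fun u _ => hsym u)]
      rw [intervalIntegral.integral_comp_sub_left (B (p+1)) ((p:ℝ)+2)]
      congr 1 <;> push_cast <;> ring

lemma B_symm (p : ℕ) (x : ℝ) : B (p+1) x = B (p+1) ((p:ℝ)+2-x) := by
  rw [B_succ_eq, B_succ_eq, int_symm]
  congr 1 <;> ring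


lemma conv_eq (p : ℕ) : ∀ (q : ℕ) (t : ℝ),
    (∫ s : ℝ, B p (t + s) * B q s) = B (p + q + 1) ((q : ℝ) + 1 + t) := by
  induction p with
  | zero =>
      intro q t
      have h1 : (fun s : ℝ => B 0 (t + s) * B q s)
          = Set.indicator (Set.Ico (-t) (1 - t)) (B q) := by
        funext s
        show (if t + s ∈ Set.Ico (0:ℝ) 1 then (1:ℝ) else 0) * B q s = _
        rw [Set.indicator_apply]
        by_cases hs : s ∈ Set.Ico (-t) (1 - t)
        · rw [if_pos hs, if_pos, one_mul]
          simp only [Set.mem_Ico] at hs ⊢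
          constructor <;> linarith [hs.1, hs.2]
        · rw [if_neg hs, if_neg, zero_mul]
          simp only [Set.mem_Ico, not_and_or, not_le, not_lt] at hs ⊢
          rcases hs with h | h
          · exact Or.inl (by linarith)
          · exact Or.inr (by linarith)
      rw [h1, integral_indicator measurableSet_Ico]
      rw [MeasureTheory.integral_Ico_eq_integral_Ioo,
        ← MeasureTheory.integral_Ioc_eq_integral_Ioo,
        ← intervalIntegral.integral_of_le (by linarith : -t ≤ 1 - t)]
      rw [int_symm q]
      rw [show (0:ℕ) + q + 1 = q + 1 by ring, B_succ_eq]
      congr 1 <;> ring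
  | succ p ih =>
      intro q t
      have hrec : ∀ x : ℝ, B (p+1) x = ∫ u in Set.Ioc (0:ℝ) 1, B p (x - u) := by
        intro x
        show (∫ s in (0:ℝ)..1, B p (x - s)) = _
        rw [intervalIntegral.integral_of_le (by norm_num : (0:ℝ) ≤ 1)]
      have hmeas : AEStronglyMeasurable
          (Function.uncurry fun s u => B p (t + s - u) * B q s)
          (volume.prod (volume.restrict (Set.Ioc (0:ℝ) 1))) := by
        apply Measurable.aestronglyMeasurable
        apply Measurable.mul
        · exact (B_measurable p).comp
            ((measurable_const.add measurable_fst).sub measurable_snd)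
        · exact (B_measurable q).comp measurable_fst
      have hbound : Integrable
          (fun z : ℝ × ℝ => Set.indicator (Set.Icc (0:ℝ) ((q:ℝ)+1) ×ˢ Set.univ)
            (fun _ => (1:ℝ)) z)
          (volume.prod (volume.restrict (Set.Ioc (0:ℝ) 1))) := by
        rw [integrable_indicator_iff (measurableSet_Icc.prod MeasurableSet.univ)]
        refine integrableOn_const ?_ (by simp)
        rw [Measure.prod_prod]
        apply ENNReal.mul_ne_top <;> simp [Measure.restrict_apply]
      have hint : Integrable (Function.uncurry fun s u => B p (t + s - u) * B q s)
          (volume.prod (volume.restrict (Set.Ioc (0:ℝ) 1))) := by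
        apply hbound.mono' hmeas
        filter_upwards with z
        rw [Function.uncurry]
        by_cases hz : z.1 ∈ Set.Icc (0:ℝ) ((q:ℝ)+1)
        · rw [Set.indicator_of_mem (by exact ⟨hz, Set.mem_univ _⟩)]
          rw [Real.norm_eq_abs, abs_mul, abs_of_nonneg (B_nonneg _ _),
            abs_of_nonneg (B_nonneg _ _)]
          calc B p (t + z.1 - z.2) * B q z.1 ≤ 1 * 1 :=
            mul_le_mul (B_le_one _ _) (B_le_one _ _) (B_nonneg _ _) (by norm_num)
          _ = 1 := by norm_num
        · have hq : B q z.1 = 0 := by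
            apply B_zero_of
            simp only [Set.mem_Icc, not_and_or, not_le] at hz
            rcases hz with h | h
            exacts [Or.inl h, Or.inr h.le]
          rw [Set.indicator_of_notMem (by simp [hz]), hq, mul_zero]
          simp
      calc (∫ s : ℝ, B (p+1) (t + s) * B q s)
          = ∫ s : ℝ, ∫ u in Set.Ioc (0:ℝ) 1, B p (t + s - u) * B q s := by
            congr 1; funext s
            rw [hrec (t + s), ← integral_mul_const]
        _ = ∫ u in Set.Ioc (0:ℝ) 1, ∫ s : ℝ, B p (t + s - u) * B q s :=
            integral_integral_swap hint
        _ = ∫ u in Set.Ioc (0:ℝ) 1, B (p + q + 1) ((q:ℝ) + 1 + (t - u)) := by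
            apply setIntegral_congr_fun measurableSet_Ioc
            intro u _
            show (∫ s : ℝ, B p (t + s - u) * B q s) = B (p + q + 1) ((q:ℝ) + 1 + (t - u))
            rw [← ih q (t - u)]
            congr 1; funext s; congr 2; ring
        _ = ∫ u in (0:ℝ)..1, B (p + q + 1) (((q:ℝ) + 1 + t) - u) := by
            rw [intervalIntegral.integral_of_le (by norm_num : (0:ℝ) ≤ 1)]
            apply setIntegral_congr_fun measurableSet_Ioc
            intro u _
            show B (p + q + 1) ((q:ℝ) + 1 + (t - u)) = B (p + q + 1) (((q:ℝ) + 1 + t) - u)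
            congr 1; ring
        _ = B (p + 1 + q + 1) ((q:ℝ) + 1 + t) := by
            rw [show p + 1 + q + 1 = (p + q + 1) + 1 by ring]
            rfl

theorem bspline_convolution (p q : ℕ) (t : ℝ) :
    (∫ s : ℝ, B p (t + s) * B q s) = B (p + q + 1) ((p : ℝ) + 1 - t) ∧
    (∫ s : ℝ, B p (t + s) * B q s) = B (p + q + 1) ((q : ℝ) + 1 + t) := by
  have h2 := conv_eq p q t
  refine ⟨?_, h2⟩
  rw [h2, show p + q + 1 = (p + q) + 1 by ring, B_symm (p + q)]
  congr 1
  push_cast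
  ring
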